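/- Let c, d be small categories, let m be a monad on c ⥤ Type whose underlying endofunctor is familial, and let p : (c ⥤ Type) ⥤ (d ⥤ Type) be a familial functor with positions p(1) and arities p[I]. Define L : (d ⥤ Type) ⥤ (d ⥤ Type) to be the familial functor with positions p(1) and with arity at a position I given by the d-copresheaf p(m(p[I])), i.e. L(Y)(D) ≅ Σ_{I ∈ p(1)(D)} Hom_{d ⥤ Type}(p(m(p[I])), Y); this is the right coclosure ⌈p / p ∘ m⌉ (the left Kan extension of p along the composite of m followed by p). Then L admits the structure of a comonad on d ⥤ Type, whose counit corresponds, under the coclosure bijection Nat(L, Id) ≅ Nat(p, (m ⋙ p) ⋙ Id) = Nat(p, m ⋙ p), to the natural transformation p ⟶ m ⋙ p obtained by whiskering the unit of m with p, and whose comultiplication is similarly induced by the multiplication of m via the coclosure universal property. -/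

import Mathlib

namespace Fam
open CategoryTheory Opposite Limits
private lemma sigmaExt {α : Type} {β : α → Type} {a a' : α} {b : β a} {b' : β a'}
    (h : a = a') (h' : HEq b b') : (⟨a, b⟩ : Σ x, β x) = ⟨a', b'⟩ := by
  subst h; cases h'; rfl
variable {c d : Type} [SmallCategory c] [SmallCategory d]
def elHom (pos : c ⥤ Type) {C C' : c} (f : C ⟶ C') (I : pos.obj C) :
    pos.elementsMk C I ⟶ pos.elementsMk C' (pos.map f I) :=
  CategoryOfElements.homMk _ _ f rfl
lemma eqToHom_val {pos : c ⥤ Type} {x y : pos.Elements} (E : x = y) :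
    (eqToHom E).val = eqToHom (congrArg Sigma.fst E) := by
  subst E; simp
@[simps]
def famApply (pos : c ⥤ Type) (ar : pos.Elementsᵒᵖ ⥤ d ⥤ Type) :
    (d ⥤ Type) ⥤ c ⥤ Type where
  obj X :=
    { obj := fun C => Σ I : pos.obj C, ar.obj (op (pos.elementsMk C I)) ⟶ X
      map := fun {C C'} f => TypeCat.ofHom fun x => ⟨pos.map f x.1, ar.map (elHom pos f x.1).op ≫ x.2⟩
      map_id := by
        intro C
        apply ConcreteCategory.hom_ext; intro x
        obtain ⟨I, g⟩ := x
        have h : pos.map (𝟙 C) I = I := by simp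
        have hE : pos.elementsMk C I = pos.elementsMk C (pos.map (𝟙 C) I) := by rw [h]
        have he : elHom pos (𝟙 C) I = eqToHom hE := by
          apply CategoryOfElements.ext
          rw [eqToHom_val]
          simp [elHom]
        dsimp
        refine sigmaExt h ?_
        rw [he]
        simp [eqToHom_op, eqToHom_map]
      map_comp := by
        intro C C' C'' f g
        apply ConcreteCategory.hom_ext; intro x
        obtain ⟨I, u⟩ := x
        have h : pos.map (f ≫ g) I = pos.map g (pos.map f I) := by simp
        have hE : pos.elementsMk C'' (pos.map (f ≫ g) I)
            = pos.elementsMk C'' (pos.map g (pos.map f I)) := by rw [h]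
        have hcomp : elHom pos f I ≫ elHom pos g (pos.map f I)
            = elHom pos (f ≫ g) I ≫ eqToHom hE := by
          apply CategoryOfElements.ext
          rw [CategoryOfElements.comp_val, CategoryOfElements.comp_val, eqToHom_val]
          simp [elHom]
        dsimp
        refine sigmaExt h ?_
        rw [← Category.assoc, ← ar.map_comp, ← op_comp, hcomp, op_comp, ar.map_comp,
          Category.assoc]
        simp [eqToHom_op, eqToHom_map] }
  map {X Y} t :=
    { app := fun C => TypeCat.ofHom fun x => ⟨x.1, x.2 ≫ t⟩
      naturality := by
        intro C C' f
        apply ConcreteCategory.hom_ext; intro x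
        simp only [types_comp_apply, TypeCat.ofHom_apply]
        rw [Category.assoc] }
  map_id := by
    intro X
    apply NatTrans.ext
    funext C; apply ConcreteCategory.hom_ext; intro x
    simp only [TypeCat.ofHom_apply, types_id_apply, NatTrans.id_app]
    rw [Category.comp_id]
  map_comp := by
    intro X Y Z s t
    apply NatTrans.ext
    funext C; apply ConcreteCategory.hom_ext; intro x
    simp only [types_comp_apply, TypeCat.ofHom_apply, NatTrans.comp_app]
    rw [Category.assoc]

/-- The unit exhibiting `famApply pos (ar ⋙ G)` as the right coclosure `⌈F/G⌉`,
i.e. the left Kan extension of the familial functor `F = famApply pos ar` along `G`. -/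
def coclosureUnit {e : Type} [SmallCategory e] (pos : c ⥤ Type)
    (ar : pos.Elementsᵒᵖ ⥤ e ⥤ Type) (G : (e ⥤ Type) ⥤ d ⥤ Type) :
    famApply pos ar ⟶ G ⋙ famApply pos (ar ⋙ G) where
  app X :=
    { app := fun C => TypeCat.ofHom fun x => ⟨x.1, G.map x.2⟩
      naturality := by
        intro C C' f
        ext x
        show (⟨pos.map f x.1, G.map (ar.map (elHom pos f x.1).op ≫ x.2)⟩ :
            Σ I : pos.obj C', (ar ⋙ G).obj (op (pos.elementsMk C' I)) ⟶ G.obj X)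
          = ⟨pos.map f x.1, G.map (ar.map (elHom pos f x.1).op) ≫ G.map x.2⟩
        rw [G.map_comp] }
  naturality := by
    intro X Y t
    apply NatTrans.ext
    funext C; ext x
    show (⟨x.1, G.map (x.2 ≫ t)⟩ :
        Σ I : pos.obj C, (ar ⋙ G).obj (op (pos.elementsMk C I)) ⟶ G.obj Y)
      = ⟨x.1, G.map x.2 ≫ G.map t⟩
    rw [G.map_comp]

section Statement1

variable {c d : Type} [SmallCategory c] [SmallCategory d]
  (m : Monad (c ⥤ Type)) (p : (c ⥤ Type) ⥤ d ⥤ Type)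
  (posp : d ⥤ Type) (arp : posp.Elementsᵒᵖ ⥤ c ⥤ Type)

/-- The composite familial functor `p ∘ m : (c ⥤ Type) ⥤ (d ⥤ Type)`
(first apply `m`, then `p`). -/
def pm : (c ⥤ Type) ⥤ d ⥤ Type :=
  (m : (c ⥤ Type) ⥤ c ⥤ Type) ⋙ p

/-- The right coclosure `⌈p / p ∘ m⌉` : the familial endofunctor of `d ⥤ Type` with the same
positions `p(1) = posp` as `p` and with arity `p (m (p[I]))` at the position `I`;
this is the left Kan extension of `p` along `p ∘ m`. -/
def coclosurePPM : (d ⥤ Type) ⥤ d ⥤ Type :=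
  famApply posp (arp ⋙ pm m p)

/-- The unit `p ⟶ (p ∘ m) ⋙ ⌈p / p ∘ m⌉` of the coclosure, transported along the
isomorphism `ep : famApply posp arp ≅ p` exhibiting `p` as a familial functor. -/
def coclosureUnitP (ep : famApply posp arp ≅ p) : p ⟶ pm m p ⋙ coclosurePPM m p posp arp :=
  ep.inv ≫ coclosureUnit posp arp (pm m p)

namespace Aux

variable (ep : famApply posp arp ≅ p)

/-- The tautological point of `p(p[I])` at `D` classified by `(I, id)`. -/
def ptA {D : d} (I : posp.obj D) :
    (p.obj (arp.obj (op (posp.elementsMk D I)))).obj D :=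
  (ep.hom.app _).app D ⟨I, 𝟙 _⟩

lemma ev {X : c ⥤ Type} {D : d} (I : posp.obj D)
    (g : arp.obj (op (posp.elementsMk D I)) ⟶ X) :
    (p.map g).app D (ptA p posp arp ep I) = (ep.hom.app X).app D ⟨I, g⟩ := by
  have h : (ep.hom.app X).app D ⟨I, 𝟙 _ ≫ g⟩ = (p.map g).app D (ptA p posp arp ep I) :=
    ConcreteCategory.congr_hom (NatTrans.congr_app (ep.hom.naturality g) D)
      (⟨I, 𝟙 _⟩ : ((famApply posp arp).obj (arp.obj (op (posp.elementsMk D I)))).obj D)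
  rw [Category.id_comp] at h
  exact h.symm

lemma ptA_nat {D D' : d} (f : D ⟶ D') (I : posp.obj D) :
    (p.obj (arp.obj (op (posp.elementsMk D I)))).map f (ptA p posp arp ep I)
      = (p.map (arp.map (elHom posp f I).op)).app D'
          (ptA p posp arp ep (posp.map f I)) := by
  rw [ev]
  have h : (ep.hom.app (arp.obj (op (posp.elementsMk D I)))).app D'
        ⟨posp.map f I, arp.map (elHom posp f I).op ≫ 𝟙 _⟩
      = (p.obj (arp.obj (op (posp.elementsMk D I)))).map f
          ((ep.hom.app _).app D ⟨I, 𝟙 _⟩) :=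
    ConcreteCategory.congr_hom ((ep.hom.app (arp.obj (op (posp.elementsMk D I)))).naturality f)
      (⟨I, 𝟙 _⟩ : ((famApply posp arp).obj (arp.obj (op (posp.elementsMk D I)))).obj D)
  rw [Category.comp_id] at h
  exact h.symm


lemma zeta_app {X : c ⥤ Type} {D : d} (y : (p.obj X).obj D) :
    ((coclosureUnitP m p posp arp ep).app X).app D y
      = ⟨((ep.inv.app X).app D y).1, (pm m p).map ((ep.inv.app X).app D y).2⟩ := rfl

lemma zeta_pt {X : c ⥤ Type} {D : d}
    (x : Σ I : posp.obj D, arp.obj (op (posp.elementsMk D I)) ⟶ X) :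
    ((coclosureUnitP m p posp arp ep).app X).app D ((ep.hom.app X).app D x)
      = ⟨x.1, (pm m p).map x.2⟩ := by
  have h : (ep.inv.app X).app D ((ep.hom.app X).app D x) = x :=
    ConcreteCategory.congr_hom (NatTrans.congr_app (NatTrans.congr_app ep.hom_inv_id X) D) x
  rw [zeta_app, h]

lemma key {B X : c ⥤ Type} (a : B ⟶ X) {Y : d ⥤ Type} (u : p.obj (m.obj X) ⟶ Y) :
    (coclosureUnitP m p posp arp ep).app (m.obj B) ≫
      (coclosurePPM m p posp arp).map (p.map (m.μ.app B) ≫ p.map (m.map a) ≫ u)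
    = p.map (m.map a) ≫ (coclosureUnitP m p posp arp ep).app (m.obj X) ≫
      (coclosurePPM m p posp arp).map (p.map (m.μ.app X) ≫ u) := by
  have hζ := (coclosureUnitP m p posp arp ep).naturality (m.map a)
  have hμ := m.μ.naturality a
  simp only [Functor.comp_map] at hμ
  conv_rhs => rw [← Category.assoc, hζ, Category.assoc]
  congr 1
  rw [Functor.comp_map]
  have hpm : (pm m p).map (m.map a) = p.map (m.map (m.map a)) := rfl
  erw [hpm, ← Functor.map_comp]
  congr 1
  show p.map (m.μ.app B) ≫ p.map (m.map a) ≫ u = p.map (m.map (m.map a)) ≫ p.map (m.μ.app X) ≫ u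
  rw [← Category.assoc, ← Category.assoc, ← Functor.map_comp, ← Functor.map_comp, hμ]

lemma comp_app_apply {F G H : d ⥤ Type} (s : F ⟶ G) (t : G ⟶ H) (D : d) (x : F.obj D) :
    (s ≫ t).app D x = t.app D (s.app D x) := rfl

lemma eps_nat_aux {D D' : d} (f : D ⟶ D') (I : posp.obj D) :
    (p.map (m.map (arp.map (elHom posp f I).op))).app D'
      ((p.map (m.η.app (arp.obj (op (posp.elementsMk D' (posp.map f I)))))).app D'
        (ptA p posp arp ep (posp.map f I)))
    = (p.obj (m.obj (arp.obj (op (posp.elementsMk D I))))).map f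
        ((p.map (m.η.app (arp.obj (op (posp.elementsMk D I))))).app D
          (ptA p posp arp ep I)) := by
  set A := arp.obj (op (posp.elementsMk D I))
  set A' := arp.obj (op (posp.elementsMk D' (posp.map f I)))
  set a : A' ⟶ A := arp.map (elHom posp f I).op
  have hba : m.η.app A' ≫ m.map a = a ≫ m.η.app A := by
    simpa using (m.η.naturality a).symm
  calc (p.map (m.map a)).app D' ((p.map (m.η.app A')).app D' (ptA p posp arp ep (posp.map f I)))
      = (p.map (m.η.app A' ≫ m.map a)).app D' (ptA p posp arp ep (posp.map f I)) := by
        rw [Functor.map_comp]; rfl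
    _ = (p.map (a ≫ m.η.app A)).app D' (ptA p posp arp ep (posp.map f I)) := by rw [hba]
    _ = (p.map (m.η.app A)).app D' ((p.map a).app D' (ptA p posp arp ep (posp.map f I))) := by
        rw [Functor.map_comp]; rfl
    _ = (p.map (m.η.app A)).app D' ((p.obj A).map f (ptA p posp arp ep I)) := by
        rw [← ptA_nat]
    _ = (p.obj (m.obj A)).map f ((p.map (m.η.app A)).app D (ptA p posp arp ep I)) :=
        NatTrans.naturality_apply _ f _

def eps : coclosurePPM m p posp arp ⟶ 𝟭 (d ⥤ Type) where
  app Y :=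
    { app := fun D => TypeCat.ofHom fun x =>
        x.2.app D ((p.map (m.η.app _)).app D (ptA p posp arp ep x.1))
      naturality := by
        intro D D' f
        ext x
        obtain ⟨I, u⟩ := x
        show ((arp ⋙ pm m p).map (elHom posp f I).op ≫ u).app D'
            ((p.map (m.η.app _)).app D' (ptA p posp arp ep (posp.map f I)))
          = Y.map f (u.app D ((p.map (m.η.app _)).app D (ptA p posp arp ep I)))
        erw [comp_app_apply]
        have h1 : ((arp ⋙ pm m p).map (elHom posp f I).op).app D'
            ((p.map (m.η.app _)).app D' (ptA p posp arp ep (posp.map f I)))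
          = (p.obj (m.obj (arp.obj (op (posp.elementsMk D I))))).map f
              ((p.map (m.η.app _)).app D (ptA p posp arp ep I)) :=
          eps_nat_aux m p posp arp ep f I
        rw [h1]
        exact NatTrans.naturality_apply u f _ }
  naturality := by
    intro Y Z t
    apply NatTrans.ext
    funext D; ext x
    rfl

def dlt : coclosurePPM m p posp arp ⟶ coclosurePPM m p posp arp ⋙ coclosurePPM m p posp arp where
  app Y :=
    { app := fun D => TypeCat.ofHom fun x =>
        ⟨x.1, (coclosureUnitP m p posp arp ep).app (m.obj _) ≫
          (coclosurePPM m p posp arp).map (p.map (m.μ.app _) ≫ x.2)⟩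
      naturality := by
        intro D D' f
        ext x
        obtain ⟨I, u⟩ := x
        refine sigmaExt rfl (heq_of_eq ?_)
        exact key m p posp arp ep (arp.map (elHom posp f I).op) u }
  naturality := by
    intro Y Z t
    apply NatTrans.ext
    funext D; ext x
    obtain ⟨I, u⟩ := x
    refine sigmaExt rfl (heq_of_eq ?_)
    show (coclosureUnitP m p posp arp ep).app (m.obj _) ≫
        (coclosurePPM m p posp arp).map (p.map (m.μ.app _) ≫ u ≫ t)
      = ((coclosureUnitP m p posp arp ep).app (m.obj _) ≫
        (coclosurePPM m p posp arp).map (p.map (m.μ.app _) ≫ u)) ≫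
        (coclosurePPM m p posp arp).map t
    rw [Category.assoc, ← Functor.map_comp]
    erw [Category.assoc (p.map (m.μ.app _))]

lemma factE (X : c ⥤ Type) :
    (coclosureUnitP m p posp arp ep).app X ≫ (eps m p posp arp ep).app ((pm m p).obj X)
      = p.map (m.η.app X) := by
  apply NatTrans.ext
  funext D; apply ConcreteCategory.hom_ext; intro y
  have hy : y = (ep.hom.app X).app D ((ep.inv.app X).app D y) :=
    by have := ConcreteCategory.congr_hom (NatTrans.congr_app (ep.inv_hom_id_app X) D) y; exact this.symm
  rw [hy]
  generalize (ep.inv.app X).app D y = x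
  obtain ⟨J, g⟩ := x
  show ((eps m p posp arp ep).app ((pm m p).obj X)).app D
      (((coclosureUnitP m p posp arp ep).app X).app D ((ep.hom.app X).app D ⟨J, g⟩))
    = (p.map (m.η.app X)).app D ((ep.hom.app X).app D ⟨J, g⟩)
  rw [zeta_pt]
  have hba : m.η.app (arp.obj (op (posp.elementsMk D J))) ≫ m.map g = g ≫ m.η.app X := by
    simpa using (m.η.naturality g).symm
  calc (p.map (m.map g)).app D
        ((p.map (m.η.app (arp.obj (op (posp.elementsMk D J))))).app D (ptA p posp arp ep J))
      = (p.map (m.η.app (arp.obj (op (posp.elementsMk D J))) ≫ m.map g)).app D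
          (ptA p posp arp ep J) := by rw [Functor.map_comp]; rfl
    _ = (p.map (g ≫ m.η.app X)).app D (ptA p posp arp ep J) := by rw [hba]
    _ = (p.map (m.η.app X)).app D ((p.map g).app D (ptA p posp arp ep J)) := by
        rw [Functor.map_comp]; rfl
    _ = (p.map (m.η.app X)).app D ((ep.hom.app X).app D ⟨J, g⟩) := by rw [ev]

lemma factD (X : c ⥤ Type) :
    (coclosureUnitP m p posp arp ep).app X ≫ (dlt m p posp arp ep).app ((pm m p).obj X)
      = (coclosureUnitP m p posp arp ep).app X ≫
          (coclosurePPM m p posp arp).map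
            ((coclosureUnitP m p posp arp ep).app (m.obj X)) ≫
          (coclosurePPM m p posp arp).map
            ((coclosurePPM m p posp arp).map (p.map (m.μ.app X))) := by
  apply NatTrans.ext
  funext D; apply ConcreteCategory.hom_ext; intro y
  have hy : y = (ep.hom.app X).app D ((ep.inv.app X).app D y) :=
    by have := ConcreteCategory.congr_hom (NatTrans.congr_app (ep.inv_hom_id_app X) D) y; exact this.symm
  rw [hy]
  generalize (ep.inv.app X).app D y = x
  obtain ⟨J, g⟩ := x
  show ((dlt m p posp arp ep).app ((pm m p).obj X)).app D
      (((coclosureUnitP m p posp arp ep).app X).app D ((ep.hom.app X).app D ⟨J, g⟩))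
    = ((coclosurePPM m p posp arp).map ((coclosurePPM m p posp arp).map (p.map (m.μ.app X)))).app D
      (((coclosurePPM m p posp arp).map ((coclosureUnitP m p posp arp ep).app (m.obj X))).app D
        (((coclosureUnitP m p posp arp ep).app X).app D ((ep.hom.app X).app D ⟨J, g⟩)))
  rw [zeta_pt]
  refine sigmaExt rfl (heq_of_eq ?_)
  have h := key m p posp arp ep g (𝟙 (p.obj (m.obj X)))
  simp only [Category.comp_id] at h
  show (coclosureUnitP m p posp arp ep).app (m.obj _) ≫
      (coclosurePPM m p posp arp).map (p.map (m.μ.app _) ≫ p.map (m.map g))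
    = (p.map (m.map g) ≫ (coclosureUnitP m p posp arp ep).app (m.obj X)) ≫
      (coclosurePPM m p posp arp).map (p.map (m.μ.app X))
  rw [Category.assoc]
  exact h

lemma counitR_aux {B : c ⥤ Type} {Y : d ⥤ Type} (u : p.obj (m.obj B) ⟶ Y) :
    ((coclosureUnitP m p posp arp ep).app (m.obj B) ≫
      (coclosurePPM m p posp arp).map (p.map (m.μ.app B) ≫ u)) ≫
        (eps m p posp arp ep).app Y = u := by
  have h1 := (eps m p posp arp ep).naturality (p.map (m.μ.app B) ≫ u)
  have hE : (eps m p posp arp ep).app (p.obj ((m.toFunctor ⋙ m.toFunctor).obj B))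
      = (eps m p posp arp ep).app ((pm m p).obj (m.obj B)) := rfl
  erw [Category.assoc, h1, Functor.id_map, ← Category.assoc, hE, factE, ← Category.assoc,
    ← Functor.map_comp, Monad.left_unit]
  simp

lemma coassoc_aux {B : c ⥤ Type} {Y : d ⥤ Type} (u : p.obj (m.obj B) ⟶ Y) :
    ((coclosureUnitP m p posp arp ep).app (m.obj B) ≫
      (coclosurePPM m p posp arp).map (p.map (m.μ.app B) ≫ u)) ≫
        (dlt m p posp arp ep).app Y
    = (coclosureUnitP m p posp arp ep).app (m.obj B) ≫
        (coclosurePPM m p posp arp).map (p.map (m.μ.app B) ≫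
          (coclosureUnitP m p posp arp ep).app (m.obj B) ≫
          (coclosurePPM m p posp arp).map (p.map (m.μ.app B) ≫ u)) := by
  have h1 := (dlt m p posp arp ep).naturality (p.map (m.μ.app B) ≫ u)
  have hD : (dlt m p posp arp ep).app (p.obj ((m.toFunctor ⋙ m.toFunctor).obj B))
      = (dlt m p posp arp ep).app ((pm m p).obj (m.obj B)) := rfl
  rw [Category.assoc]
  erw [h1]
  erw [← Category.assoc ((coclosureUnitP m p posp arp ep).app (m.obj B)), hD, factD]
  rw [Category.assoc, Category.assoc]
  congr 1
  rw [Functor.comp_map, ← Functor.map_comp]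
  erw [← Functor.map_comp (coclosurePPM m p posp arp)]
  congr 1
  have h2 := (coclosureUnitP m p posp arp ep).naturality (m.μ.app B)
  have hz : (coclosureUnitP m p posp arp ep).app ((m.toFunctor ⋙ m.toFunctor).obj B)
      = (coclosureUnitP m p posp arp ep).app (m.obj (m.obj B)) := rfl
  conv_rhs => erw [← Category.assoc (p.map (m.μ.app B)), h2, Category.assoc, hz]
  congr 1
  rw [Functor.comp_map, ← Functor.map_comp]
  erw [← Functor.map_comp (coclosurePPM m p posp arp)]
  congr 1
  have hpm : (pm m p).map (m.μ.app B) = p.map (m.map (m.μ.app B)) := rfl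
  show p.map (m.μ.app (m.obj B)) ≫ p.map (m.μ.app B) ≫ u
    = p.map (m.map (m.μ.app B)) ≫ p.map (m.μ.app B) ≫ u
  rw [← Category.assoc, ← Category.assoc, ← Functor.map_comp, ← Functor.map_comp,
    Monad.assoc]

lemma law_coassoc (Y : d ⥤ Type) :
    (dlt m p posp arp ep).app Y ≫
        (coclosurePPM m p posp arp).map ((dlt m p posp arp ep).app Y)
      = (dlt m p posp arp ep).app Y ≫
        (dlt m p posp arp ep).app ((coclosurePPM m p posp arp).obj Y) := by
  apply NatTrans.ext
  funext D; ext x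
  obtain ⟨I, u⟩ := x
  exact sigmaExt rfl (heq_of_eq (coassoc_aux m p posp arp ep u))

lemma law_counitL (Y : d ⥤ Type) :
    (dlt m p posp arp ep).app Y ≫
        (eps m p posp arp ep).app ((coclosurePPM m p posp arp).obj Y)
      = 𝟙 ((coclosurePPM m p posp arp).obj Y) := by
  apply NatTrans.ext
  funext D; ext x
  obtain ⟨I, u⟩ := x
  show ((coclosureUnitP m p posp arp ep).app (m.obj _) ≫
      (coclosurePPM m p posp arp).map (p.map (m.μ.app _) ≫ u)).app D
      ((p.map (m.η.app _)).app D (ptA p posp arp ep I)) = ⟨I, u⟩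
  rw [ev, comp_app_apply, zeta_pt]
  refine sigmaExt rfl (heq_of_eq ?_)
  show (pm m p).map (m.η.app _) ≫ p.map (m.μ.app _) ≫ u = u
  have hpm : (pm m p).map (m.η.app (arp.obj (op (posp.elementsMk D I))))
      = p.map (m.map (m.η.app (arp.obj (op (posp.elementsMk D I))))) := rfl
  erw [hpm, ← Category.assoc, ← Functor.map_comp, Monad.right_unit]
  rw [CategoryTheory.Functor.map_id]
  exact Category.id_comp u

lemma law_counitR (Y : d ⥤ Type) :
    (dlt m p posp arp ep).app Y ≫
        (coclosurePPM m p posp arp).map ((eps m p posp arp ep).app Y)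
      = 𝟙 ((coclosurePPM m p posp arp).obj Y) := by
  apply NatTrans.ext
  funext D; ext x
  obtain ⟨I, u⟩ := x
  exact sigmaExt rfl (heq_of_eq (counitR_aux m p posp arp ep u))

end Aux

/-- For a familial monad `m` on `c ⥤ Type` and a familial functor
`p : (c ⥤ Type) ⥤ (d ⥤ Type)`, the right coclosure `L := ⌈p / p ∘ m⌉` (positions `p(1)`,
arity `p(m(p[I]))` at `I`) carries the structure of a comonad on `d ⥤ Type`, whose counit
corresponds under the coclosure bijection to the whiskering `p ⟶ m ⋙ p` of the unit of `m`
with `p`, and whose comultiplication is similarly induced by the multiplication of `m`. -/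
theorem coclosure_comonad
    (posm : c ⥤ Type) (arm : posm.Elementsᵒᵖ ⥤ c ⥤ Type)
    (em : famApply posm arm ≅ (m : (c ⥤ Type) ⥤ c ⥤ Type))
    (ep : famApply posp arp ≅ p) :
    ∃ (ε : coclosurePPM m p posp arp ⟶ 𝟭 (d ⥤ Type))
      (δ : coclosurePPM m p posp arp ⟶ coclosurePPM m p posp arp ⋙ coclosurePPM m p posp arp),
      -- comonad laws
      (∀ Y : d ⥤ Type, δ.app Y ≫ (coclosurePPM m p posp arp).map (δ.app Y) =
        δ.app Y ≫ δ.app ((coclosurePPM m p posp arp).obj Y)) ∧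
      (∀ Y : d ⥤ Type,
        δ.app Y ≫ ε.app ((coclosurePPM m p posp arp).obj Y) =
          𝟙 ((coclosurePPM m p posp arp).obj Y)) ∧
      (∀ Y : d ⥤ Type,
        δ.app Y ≫ (coclosurePPM m p posp arp).map (ε.app Y) =
          𝟙 ((coclosurePPM m p posp arp).obj Y)) ∧
      -- the counit corresponds, under the coclosure universal property, to the
      -- whiskering of the unit of `m` with `p`
      (∀ X : c ⥤ Type,
        (coclosureUnitP m p posp arp ep).app X ≫ ε.app ((pm m p).obj X) =
          p.map (m.η.app X)) ∧
      -- the comultiplication corresponds to the transformation induced by the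
      -- multiplication of `m`
      (∀ X : c ⥤ Type,
        (coclosureUnitP m p posp arp ep).app X ≫ δ.app ((pm m p).obj X) =
          (coclosureUnitP m p posp arp ep).app X ≫
            (coclosurePPM m p posp arp).map
              ((coclosureUnitP m p posp arp ep).app ((m : (c ⥤ Type) ⥤ c ⥤ Type).obj X)) ≫
            (coclosurePPM m p posp arp).map ((coclosurePPM m p posp arp).map
              (p.map (m.μ.app X)))) := by
  exact ⟨Aux.eps m p posp arp ep, Aux.dlt m p posp arp ep, Aux.law_coassoc m p posp arp ep,
    Aux.law_counitL m p posp arp ep, Aux.law_counitR m p posp arp ep,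
    Aux.factE m p posp arp ep, Aux.factD m p posp arp ep⟩

end Statement1

end Fam
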